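/- Nonlinear value vs. utility bound: under the same setup as the payment bound (C with α*x ≤ C(x) ≤ β*x for x ≥ 0, β*x ≤ C(x) ≤ α*x for x ≤ 0, 0 < α ≤ β; budget balance ∑ᵢ∑ₜ p̂ᵢᵗ = ∑ᵢ∑ₜ r̂ᵢᵗ; no-overbidding ∑ₜ C(p̂ᵢᵗ) ≤ Vᵢ), the total allocated value satisfies ∑ᵢ Vᵢ ≤ (β/α) * ∑ᵢ uᵢ, where uᵢ = Vᵢ − ∑ₜ C(p̂ᵢᵗ) − ∑ₜ C(−r̂ᵢᵗ). -/
import Mathlib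


theorem nonlinear_value_vs_utility (n : ℕ) (α β : ℝ)
    (hα : 0 < α) (hαβ : α ≤ β)
    (C : ℝ → ℝ)
    (hCpos : ∀ x : ℝ, 0 ≤ x → α * x ≤ C x ∧ C x ≤ β * x)
    (hCneg : ∀ x : ℝ, x ≤ 0 → β * x ≤ C x ∧ C x ≤ α * x)
    (V : Fin n → ℝ) (hV : ∀ i, 0 ≤ V i)
    (phat rhat : Fin n → Fin n → ℝ)
    (hphat : ∀ i t, 0 ≤ phat i t) (hrhat : ∀ i t, 0 ≤ rhat i t)
    (hbb : ∑ i, ∑ t, phat i t = ∑ i, ∑ t, rhat i t)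
    (hnob : ∀ i, ∑ t, C (phat i t) ≤ V i)
    (u : Fin n → ℝ)
    (hu : ∀ i, u i = V i - ∑ t, C (phat i t) - ∑ t, C (-(rhat i t))) :
    ∑ i, V i ≤ (β / α) * ∑ i, u i := by
  set P := ∑ i, ∑ t, C (phat i t) with hP
  set S := ∑ i : Fin n, ∑ t, phat i t with hS
  set R := ∑ i : Fin n, ∑ t, C (-(rhat i t)) with hRdef
  have hPS : P ≤ β * S := by
    rw [hP, hS, Finset.mul_sum]
    refine Finset.sum_le_sum fun i _ => ?_
    rw [Finset.mul_sum]
    exact Finset.sum_le_sum fun t _ => (hCpos _ (hphat i t)).2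
  have hR : R ≤ -(α * S) := by
    have : R ≤ α * ∑ i : Fin n, ∑ t, (-(rhat i t)) := by
      rw [hRdef, Finset.mul_sum]
      refine Finset.sum_le_sum fun i _ => ?_
      rw [Finset.mul_sum]
      exact Finset.sum_le_sum fun t _ => (hCneg _ (by linarith [hrhat i t])).2
    have h2 : ∑ i : Fin n, ∑ t, (-(rhat i t)) = -S := by
      have : ∑ i : Fin n, ∑ t, (-(rhat i t)) = -∑ i : Fin n, ∑ t, rhat i t := by simp
      rw [this, ← hbb]
    rw [h2] at this; linarith
  have hPV : P ≤ ∑ i, V i := by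
    rw [hP]; exact Finset.sum_le_sum fun i _ => hnob i
  have hsumu : ∑ i, u i = ∑ i, V i - P - R := by
    rw [hP, hRdef]
    rw [← Finset.sum_sub_distrib, ← Finset.sum_sub_distrib]
    exact Finset.sum_congr rfl fun i _ => hu i
  rw [div_mul_eq_mul_div, le_div_iff₀ hα]
  nlinarith [mul_le_mul_of_nonneg_left hPS hα.le]
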